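/- arXiv:2402.09414 — 7 statements merged into one kernel-verified Lean document; each statement's English description precedes it below -/
import Mathlib

section
/- Suppose ||Z_1 - Z_3|| = ||Z_2 - Z_3||, d_1 = d_2, and the circles S_1 and S_2 intersect at two points S_{12±}. Then the threshold d_3^0 = sqrt( (||Z_3 - S_{12+}||² + ||Z_3 - S_{12-}||²)/2 ) satisfies d_3^0 = sqrt( d_1² + ||Z_1 - Z_3||² - ||Z_1 - Z_2||²/2 ). -/
set_option maxHeartbeats 1000000

private lemma dsq (x y : EuclideanSpace ℝ (Fin 2)) :
    dist x y ^ 2 = (x 0 - y 0) ^ 2 + (x 1 - y 1) ^ 2 := by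
  rw [EuclideanSpace.dist_eq, Real.sq_sqrt (by positivity)]
  simp [Fin.sum_univ_two, Real.dist_eq, sq_abs]

theorem stmt_2 (Z₁ Z₂ Z₃ S₁₂p S₁₂m : EuclideanSpace ℝ (Fin 2)) (d₁ d₂ : ℝ)
    (hd₁ : 0 < d₁)
    (hiso : dist Z₁ Z₃ = dist Z₂ Z₃) (hd : d₁ = d₂) (hZ : Z₁ ≠ Z₂)
    (hp₁ : dist S₁₂p Z₁ = d₁) (hp₂ : dist S₁₂p Z₂ = d₂)
    (hm₁ : dist S₁₂m Z₁ = d₁) (hm₂ : dist S₁₂m Z₂ = d₂)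
    (hne : S₁₂p ≠ S₁₂m) :
    Real.sqrt ((dist Z₃ S₁₂p ^ 2 + dist Z₃ S₁₂m ^ 2) / 2) =
      Real.sqrt (d₁ ^ 2 + dist Z₁ Z₃ ^ 2 - dist Z₁ Z₂ ^ 2 / 2) := by
  subst hd
  set p0 := S₁₂p 0; set p1 := S₁₂p 1
  set m0 := S₁₂m 0; set m1 := S₁₂m 1
  set a0 := Z₁ 0; set a1 := Z₁ 1
  set b0 := Z₂ 0; set b1 := Z₂ 1
  set c0 := Z₃ 0; set c1 := Z₃ 1
  have hp₁s : (p0 - a0) ^ 2 + (p1 - a1) ^ 2 = d₁ ^ 2 := by rw [← dsq, hp₁]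
  have hp₂s : (p0 - b0) ^ 2 + (p1 - b1) ^ 2 = d₁ ^ 2 := by rw [← dsq, hp₂]
  have hm₁s : (m0 - a0) ^ 2 + (m1 - a1) ^ 2 = d₁ ^ 2 := by rw [← dsq, hm₁]
  have hm₂s : (m0 - b0) ^ 2 + (m1 - b1) ^ 2 = d₁ ^ 2 := by rw [← dsq, hm₂]
  have hisos : (a0 - c0) ^ 2 + (a1 - c1) ^ 2 = (b0 - c0) ^ 2 + (b1 - c1) ^ 2 := by
    rw [← dsq, ← dsq, hiso]
  -- nonzero vectors (via positive distances)
  have hw : 0 < (a0 - b0) ^ 2 + (a1 - b1) ^ 2 := by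
    rw [← dsq]; exact pow_pos (dist_pos.mpr hZ) 2
  have hv : 0 < (p0 - m0) ^ 2 + (p1 - m1) ^ 2 := by
    rw [← dsq]; exact pow_pos (dist_pos.mpr hne) 2
  -- orthogonality relations
  have hvw : (p0 - m0) * (a0 - b0) + (p1 - m1) * (a1 - b1) = 0 := by
    linear_combination (-hp₁s + hp₂s + hm₁s - hm₂s) / 2
  have hvu : (p0 - m0) * (p0 + m0 - a0 - b0) + (p1 - m1) * (p1 + m1 - a1 - b1) = 0 := by
    linear_combination (hp₁s + hp₂s - hm₁s - hm₂s) / 2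
  have hwu : (a0 - b0) * (p0 + m0 - a0 - b0) + (a1 - b1) * (p1 + m1 - a1 - b1) = 0 := by
    linear_combination (-hp₁s + hp₂s - hm₁s + hm₂s) / 2
  -- determinant nonzero
  have heq : ((p0 - m0) * (a1 - b1) - (p1 - m1) * (a0 - b0)) ^ 2
      = ((p0 - m0) ^ 2 + (p1 - m1) ^ 2) * ((a0 - b0) ^ 2 + (a1 - b1) ^ 2) := by
    linear_combination (-((p0 - m0) * (a0 - b0) + (p1 - m1) * (a1 - b1))) * hvw
  have hdet : (p0 - m0) * (a1 - b1) - (p1 - m1) * (a0 - b0) ≠ 0 := by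
    intro h
    rw [h] at heq
    have hpos := mul_pos hv hw
    simp only [ne_eq, OfNat.ofNat_ne_zero, not_false_eq_true, zero_pow] at heq
    linarith
  have hu0 : p0 + m0 - a0 - b0 = 0 := by
    have h : ((p0 - m0) * (a1 - b1) - (p1 - m1) * (a0 - b0)) * (p0 + m0 - a0 - b0) = 0 := by
      linear_combination (a1 - b1) * hvu - (p1 - m1) * hwu
    exact (mul_eq_zero.mp h).resolve_left hdet
  have hu1 : p1 + m1 - a1 - b1 = 0 := by
    have h : ((p0 - m0) * (a1 - b1) - (p1 - m1) * (a0 - b0)) * (p1 + m1 - a1 - b1) = 0 := by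
      linear_combination (p0 - m0) * hwu - (a0 - b0) * hvu
    exact (mul_eq_zero.mp h).resolve_left hdet
  have hpw : (2*p0 - a0 - b0) * (a0 - b0) + (2*p1 - a1 - b1) * (a1 - b1) = 0 := by
    linear_combination hp₂s - hp₁s
  congr 1
  rw [dsq Z₃ S₁₂p, dsq Z₃ S₁₂m, dsq Z₁ Z₃, dsq Z₁ Z₂]
  linear_combination hp₁s - hisos / 2 + hpw / 2 +
    ((m0 - p0) / 2 - c0 + (a0 + b0) / 2) * hu0 +
    ((m1 - p1) / 2 - c1 + (a1 + b1) / 2) * hu1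
end

section
/- Suppose ||Z_1 - Z_3|| = ||Z_2 - Z_3||, d_1 = d_2, and the circles S_2 and S_3 intersect at two points S_{23+} (closer to Z_1) and S_{23-} (farther from Z_1). Then (1/2)||Z_1 - S_{23+}||² + (1/2)||Z_1 - S_{23-}||² = d_1² + (||Z_1 - Z_2||² / (2||Z_1 - Z_3||²)) · (d_3² + ||Z_1 - Z_3||² - d_1²). In particular, d_1² < (1/2)||Z_1 - S_{23+}||² + (1/2)||Z_1 - S_{23-}||² if and only if d_1² < d_3² + ||Z_1 - Z_3||². -/
theorem stmt_3 (Z₁ Z₂ Z₃ S₂₃p S₂₃m : EuclideanSpace ℝ (Fin 2)) (d₁ d₂ d₃ : ℝ)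
    (hd₁ : 0 < d₁) (hd₃ : 0 < d₃)
    (hiso : dist Z₁ Z₃ = dist Z₂ Z₃) (hd : d₁ = d₂)
    (hZ12 : Z₁ ≠ Z₂) (hZ13 : Z₁ ≠ Z₃)
    (hp₂ : dist S₂₃p Z₂ = d₂) (hp₃ : dist S₂₃p Z₃ = d₃)
    (hm₂ : dist S₂₃m Z₂ = d₂) (hm₃ : dist S₂₃m Z₃ = d₃)
    (hne : S₂₃p ≠ S₂₃m)
    (hord : dist Z₁ S₂₃p ≤ dist Z₁ S₂₃m) :
    (1 / 2) * dist Z₁ S₂₃p ^ 2 + (1 / 2) * dist Z₁ S₂₃m ^ 2 =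
      d₁ ^ 2 + (dist Z₁ Z₂ ^ 2 / (2 * dist Z₁ Z₃ ^ 2)) *
        (d₃ ^ 2 + dist Z₁ Z₃ ^ 2 - d₁ ^ 2) ∧
    (d₁ ^ 2 < (1 / 2) * dist Z₁ S₂₃p ^ 2 + (1 / 2) * dist Z₁ S₂₃m ^ 2 ↔
      d₁ ^ 2 < d₃ ^ 2 + dist Z₁ Z₃ ^ 2) := by
  have dsq : ∀ x y : EuclideanSpace ℝ (Fin 2),
      dist x y ^ 2 = (x 0 - y 0)^2 + (x 1 - y 1)^2 := by
    intro x y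
    rw [EuclideanSpace.dist_eq, Real.sq_sqrt (by positivity)]
    simp [Fin.sum_univ_two, Real.dist_eq, sq_abs]
  have hL2pos : (0:ℝ) < dist Z₁ Z₃ ^ 2 := pow_pos (dist_pos.mpr hZ13) 2
  have hqpos : (0:ℝ) < dist Z₁ Z₂ ^ 2 := pow_pos (dist_pos.mpr hZ12) 2
  have key : dist Z₁ S₂₃p ^ 2 + dist Z₁ S₂₃m ^ 2
      = 2*d₁^2 + dist Z₁ Z₂ ^ 2 / dist Z₁ Z₃ ^ 2 * (d₃^2 + dist Z₁ Z₃ ^ 2 - d₁^2) := by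
    rw [dsq Z₁ S₂₃p, dsq Z₁ S₂₃m, dsq Z₁ Z₂, dsq Z₁ Z₃]
    set x1 := Z₁ 0 with hx1
    set y1 := Z₁ 1 with hy1
    set x2 := Z₂ 0 with hx2
    set y2 := Z₂ 1 with hy2
    set x3 := Z₃ 0 with hx3
    set y3 := Z₃ 1 with hy3
    set p0 := S₂₃p 0 with hp0
    set p1 := S₂₃p 1 with hp1
    set m0 := S₂₃m 0 with hm0
    set m1 := S₂₃m 1 with hm1
    have E1 : (p0 - x2)^2 + (p1 - y2)^2 = d₁^2 := by rw [← dsq, hp₂, hd]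
    have E2 : (p0 - x3)^2 + (p1 - y3)^2 = d₃^2 := by rw [← dsq, hp₃]
    have E3 : (m0 - x2)^2 + (m1 - y2)^2 = d₁^2 := by rw [← dsq, hm₂, hd]
    have E4 : (m0 - x3)^2 + (m1 - y3)^2 = d₃^2 := by rw [← dsq, hm₃]
    have H5 : (x1-x3)^2+(y1-y3)^2 = (x2-x3)^2+(y2-y3)^2 := by
      rw [← dsq, ← dsq, hiso]
    have L2pos : (0:ℝ) < (x1-x3)^2+(y1-y3)^2 := by rw [← dsq]; exact hL2pos
    have spos : (0:ℝ) < (p0-m0)^2+(p1-m1)^2 := by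
      rw [← dsq]; exact pow_pos (dist_pos.mpr hne) 2
    have sB : (p0-m0)*(x2-x3) + (p1-m1)*(y2-y3) = 0 := by
      linear_combination (E2 - E4 - E1 + E3)/2
    have hrs : (((x1-x3)^2+(y1-y3)^2)*(p0+m0-2*x3) - 2*((p0-x3)*(x2-x3)+(p1-y3)*(y2-y3))*(x2-x3))*(p0-m0) + (((x1-x3)^2+(y1-y3)^2)*(p1+m1-2*y3) - 2*((p0-x3)*(x2-x3)+(p1-y3)*(y2-y3))*(y2-y3))*(p1-m1) = 0 := by
      linear_combination ((x1-x3)^2+(y1-y3)^2)*(E2-E4) - 2*((p0-x3)*(x2-x3)+(p1-y3)*(y2-y3))*sB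
    have hra : (((x1-x3)^2+(y1-y3)^2)*(p0+m0-2*x3) - 2*((p0-x3)*(x2-x3)+(p1-y3)*(y2-y3))*(x2-x3))*(x2-x3) + (((x1-x3)^2+(y1-y3)^2)*(p1+m1-2*y3) - 2*((p0-x3)*(x2-x3)+(p1-y3)*(y2-y3))*(y2-y3))*(y2-y3) = 0 := by
      linear_combination 2*((p0-x3)*(x2-x3)+(p1-y3)*(y2-y3))*H5 - ((x1-x3)^2+(y1-y3)^2)*sB
    have hD2 : ((p0-m0)*(y2-y3) - (p1-m1)*(x2-x3))^2 = ((p0-m0)^2+(p1-m1)^2) * ((x2-x3)^2+(y2-y3)^2) := by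
      linear_combination (-((p0-m0)*(x2-x3)+(p1-m1)*(y2-y3)))*sB
    have apos : (0:ℝ) < ((x2-x3)^2+(y2-y3)^2) := H5 ▸ L2pos
    have hDpos : (0:ℝ) < ((p0-m0)*(y2-y3) - (p1-m1)*(x2-x3))^2 := by rw [hD2]; exact mul_pos spos apos
    have hDne : ((p0-m0)*(y2-y3) - (p1-m1)*(x2-x3)) ≠ 0 := by
      intro h
      rw [h] at hDpos
      simp at hDpos
    have hRxD : (((x1-x3)^2+(y1-y3)^2)*(p0+m0-2*x3) - 2*((p0-x3)*(x2-x3)+(p1-y3)*(y2-y3))*(x2-x3)) * ((p0-m0)*(y2-y3) - (p1-m1)*(x2-x3)) = 0 := by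
      linear_combination (y2-y3)*hrs - (p1-m1)*hra
    have hRyD : (((x1-x3)^2+(y1-y3)^2)*(p1+m1-2*y3) - 2*((p0-x3)*(x2-x3)+(p1-y3)*(y2-y3))*(y2-y3)) * ((p0-m0)*(y2-y3) - (p1-m1)*(x2-x3)) = 0 := by
      linear_combination (p0-m0)*hra - (x2-x3)*hrs
    have hRx : (((x1-x3)^2+(y1-y3)^2)*(p0+m0-2*x3) - 2*((p0-x3)*(x2-x3)+(p1-y3)*(y2-y3))*(x2-x3)) = 0 := (mul_eq_zero.mp hRxD).resolve_right hDne
    have hRy : (((x1-x3)^2+(y1-y3)^2)*(p1+m1-2*y3) - 2*((p0-x3)*(x2-x3)+(p1-y3)*(y2-y3))*(y2-y3)) = 0 := (mul_eq_zero.mp hRyD).resolve_right hDne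
    field_simp
    linear_combination ((x1-x3)^2+(y1-y3)^2)*E2 + ((x1-x3)^2+(y1-y3)^2)*E4 - 2*(x1-x3)*hRx - 2*(y1-y3)*hRy
      + (d₃^2 + ((x1-x3)^2+(y1-y3)^2) - d₁^2)*H5 - (((x1-x3)^2+(y1-y3)^2) + ((x2-x3)^2+(y2-y3)^2) - ((x1-x2)^2+(y1-y2)^2))*(E2 - E1 - H5)
  have keq : (1 / 2) * dist Z₁ S₂₃p ^ 2 + (1 / 2) * dist Z₁ S₂₃m ^ 2 =
      d₁ ^ 2 + (dist Z₁ Z₂ ^ 2 / (2 * dist Z₁ Z₃ ^ 2)) *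
        (d₃ ^ 2 + dist Z₁ Z₃ ^ 2 - d₁ ^ 2) := by
    field_simp
    field_simp at key
    linarith [key]
  refine ⟨keq, ?_⟩
  rw [keq]
  have hc : (0:ℝ) < dist Z₁ Z₂ ^ 2 / (2 * dist Z₁ Z₃ ^ 2) := by positivity
  constructor
  · intro h
    nlinarith [hc]
  · intro h
    nlinarith [mul_pos hc (by linarith : (0:ℝ) < d₃ ^ 2 + dist Z₁ Z₃ ^ 2 - d₁ ^ 2)]
end

section
/- Suppose the triangle Z_1 Z_2 Z_3 is equilateral with side length r, and d_1 = d_2 = d_3 = d. If d ≤ r/√3, then the centroid Y_0 = (Z_1+Z_2+Z_3)/3 is a global minimizer of O(W) = Σ_{j=1}^{3} |d² - ||W - Z_j||²|, and O(Y_0) = 3(r²/3 - d²) (in particular O(Y_0) = r² - 3d²). -/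
theorem stmt_6 (Z₁ Z₂ Z₃ Y₀ : EuclideanSpace ℝ (Fin 2)) (r d : ℝ)
    (hr : 0 < r) (hd : 0 < d)
    (h12 : dist Z₁ Z₂ = r) (h23 : dist Z₂ Z₃ = r) (h31 : dist Z₃ Z₁ = r)
    (hdle : d ≤ r / Real.sqrt 3)
    (hY₀ : Y₀ = (3 : ℝ)⁻¹ • (Z₁ + Z₂ + Z₃))
    (O : EuclideanSpace ℝ (Fin 2) → ℝ)
    (hO : ∀ W, O W = |d ^ 2 - dist W Z₁ ^ 2| + |d ^ 2 - dist W Z₂ ^ 2| +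
      |d ^ 2 - dist W Z₃ ^ 2|) :
    (∀ W, O Y₀ ≤ O W) ∧ O Y₀ = 3 * (r ^ 2 / 3 - d ^ 2) := by
  have key : ∀ x y : EuclideanSpace ℝ (Fin 2),
      dist x y ^ 2 = (x 0 - y 0) ^ 2 + (x 1 - y 1) ^ 2 := by
    intro x y
    rw [EuclideanSpace.dist_eq, Real.sq_sqrt (by positivity)]
    simp [Fin.sum_univ_two, Real.dist_eq, sq_abs]
  have hs3 : Real.sqrt 3 ^ 2 = 3 := Real.sq_sqrt (by norm_num)
  have hs3pos : 0 < Real.sqrt 3 := by positivity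
  have hd2 : d ^ 2 ≤ r ^ 2 / 3 := by
    have h1 : d * Real.sqrt 3 ≤ r := by
      rw [div_eq_mul_inv] at hdle
      calc d * Real.sqrt 3 ≤ r * (Real.sqrt 3)⁻¹ * Real.sqrt 3 := by
            apply mul_le_mul_of_nonneg_right hdle hs3pos.le
        _ = r := by field_simp
    have h2 := mul_self_le_mul_self (by positivity : (0:ℝ) ≤ d * Real.sqrt 3) h1
    nlinarith [h2, hs3]
  have hY : ∀ i, Y₀ i = (Z₁ i + Z₂ i + Z₃ i) / 3 := by
    intro i
    rw [hY₀]
    simp [PiLp.smul_apply, PiLp.add_apply]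
    ring
  have e12 : (Z₁ 0 - Z₂ 0) ^ 2 + (Z₁ 1 - Z₂ 1) ^ 2 = r ^ 2 := by rw [← key, h12]
  have e23 : (Z₂ 0 - Z₃ 0) ^ 2 + (Z₂ 1 - Z₃ 1) ^ 2 = r ^ 2 := by rw [← key, h23]
  have e31 : (Z₃ 0 - Z₁ 0) ^ 2 + (Z₃ 1 - Z₁ 1) ^ 2 = r ^ 2 := by rw [← key, h31]
  have hc1 : dist Y₀ Z₁ ^ 2 = r ^ 2 / 3 := by
    rw [key, hY 0, hY 1]; linear_combination (2 * e12 + 2 * e31 - e23) / 9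
  have hc2 : dist Y₀ Z₂ ^ 2 = r ^ 2 / 3 := by
    rw [key, hY 0, hY 1]; linear_combination (2 * e12 + 2 * e23 - e31) / 9
  have hc3 : dist Y₀ Z₃ ^ 2 = r ^ 2 / 3 := by
    rw [key, hY 0, hY 1]; linear_combination (2 * e23 + 2 * e31 - e12) / 9
  have hOY : O Y₀ = 3 * (r ^ 2 / 3 - d ^ 2) := by
    rw [hO, hc1, hc2, hc3, abs_of_nonpos (by linarith), ]
    ring
  refine ⟨?_, hOY⟩
  intro W
  rw [hOY]
  have hsum : r ^ 2 ≤ dist W Z₁ ^ 2 + dist W Z₂ ^ 2 + dist W Z₃ ^ 2 := by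
    rw [key, key, key]
    nlinarith [sq_nonneg (3 * W 0 - Z₁ 0 - Z₂ 0 - Z₃ 0),
      sq_nonneg (3 * W 1 - Z₁ 1 - Z₂ 1 - Z₃ 1), e12, e23, e31]
  have a1 := neg_abs_le (d ^ 2 - dist W Z₁ ^ 2)
  have a2 := neg_abs_le (d ^ 2 - dist W Z₂ ^ 2)
  have a3 := neg_abs_le (d ^ 2 - dist W Z₃ ^ 2)
  rw [hO]
  linarith
end

section
/- Suppose the triangle Z_1 Z_2 Z_3 is equilateral with side length r, d_1 = d_2 = d_3 = d with d > r/√3. The global minimizers of O(W) = Σ_{j=1}^{3} |d² - ||W - Z_j||²| are exactly the three points S_{12+}, S_{23+}, S_{31+}, i.e., for each pair of circles the intersection point closer to the opposite vertex. -/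
set_option maxHeartbeats 1000000

open scoped RealInnerProductSpace

private lemma aux_spread (X Y : ℝ) :
    3*(X^2+X*Y+Y^2) ≤ (2*X+Y)^2 ∨ 3*(X^2+X*Y+Y^2) ≤ (X-Y)^2 ∨
    3*(X^2+X*Y+Y^2) ≤ (X+2*Y)^2 := by
  rcases le_or_gt 0 ((X-Y)*(X+2*Y)) with h | h
  · left; nlinarith
  rcases le_or_gt ((2*X+Y)*(X+2*Y)) 0 with h2 | h2
  · right; left; nlinarith
  · right; right; nlinarith [sq_nonneg (X+2*Y), mul_pos h2 h2]

private lemma core_ineq (t u1 u2 u3 X Y : ℝ) (ht : t < 1/3)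
    (hsum : u1+u2+u3 = 3*((3*t^2-3*t+2/3) - (X^2+X*Y+Y^2)))
    (h21 : u2 - u1 = 2*X+Y) (h23 : u2 - u3 = X-Y) (h13 : u1 - u3 = -(X+2*Y)) :
    1-3*t ≤ |u1|+|u2|+|u3| := by
  rcases le_or_gt (3*(X^2+X*Y+Y^2)) ((1-3*t)^2) with hP | hP
  · have h1 := le_abs_self u1
    have h2 := le_abs_self u2
    have h3 := le_abs_self u3
    nlinarith
  · have hmpos : 0 < 1-3*t := by linarith
    rcases aux_spread X Y with hs | hs | hs
    · have habs : |u2 - u1| ≤ |u1| + |u2| := by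
        have := abs_sub u2 u1; linarith
      have h3 := abs_nonneg u3
      have hsq : (u2-u1)^2 = (2*X+Y)^2 := by rw [h21]
      have : 1-3*t ≤ |u2 - u1| := by
        nlinarith [sq_abs (u2-u1), abs_nonneg (u2-u1), hsq]
      linarith
    · have habs : |u2 - u3| ≤ |u2| + |u3| := abs_sub _ _
      have h1 := abs_nonneg u1
      have hsq : (u2-u3)^2 = (X-Y)^2 := by rw [h23]
      have : 1-3*t ≤ |u2 - u3| := by
        nlinarith [sq_abs (u2-u3), abs_nonneg (u2-u3), hsq]
      linarith
    · have habs : |u1 - u3| ≤ |u1| + |u3| := abs_sub _ _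
      have h2 := abs_nonneg u2
      have hsq : (u1-u3)^2 = (X+2*Y)^2 := by rw [h13]; ring
      have : 1-3*t ≤ |u1 - u3| := by
        nlinarith [sq_abs (u1-u3), abs_nonneg (u1-u3), hsq]
      linarith

private lemma core_eq (t u1 u2 u3 X Y : ℝ) (ht : t < 1/3)
    (hsum : u1+u2+u3 = 3*((3*t^2-3*t+2/3) - (X^2+X*Y+Y^2)))
    (h21 : u2 - u1 = 2*X+Y) (h23 : u2 - u3 = X-Y) (h13 : u1 - u3 = -(X+2*Y))
    (h : |u1|+|u2|+|u3| = 1-3*t) :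
    (u1 = 0 ∧ u2 = 0 ∧ 0 ≤ u3) ∨ (u2 = 0 ∧ u3 = 0 ∧ 0 ≤ u1) ∨
    (u3 = 0 ∧ u1 = 0 ∧ 0 ≤ u2) := by
  have hmpos : 0 < 1-3*t := by linarith
  have hP : 3*(X^2+X*Y+Y^2) ≤ (1-3*t)^2 := by
    by_contra hP'
    push_neg at hP'
    rcases aux_spread X Y with hs | hs | hs
    · have hsq : (u2-u1)^2 = (2*X+Y)^2 := by rw [h21]
      have habs : |u2 - u1| ≤ |u2| + |u1| := abs_sub _ _
      have h3 := abs_nonneg u3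
      nlinarith [sq_abs (u2-u1), abs_nonneg (u2-u1)]
    · have hsq : (u2-u3)^2 = (X-Y)^2 := by rw [h23]
      have habs : |u2 - u3| ≤ |u2| + |u3| := abs_sub _ _
      have h1 := abs_nonneg u1
      nlinarith [sq_abs (u2-u3), abs_nonneg (u2-u3)]
    · have hsq : (u1-u3)^2 = (X+2*Y)^2 := by rw [h13]; ring
      have habs : |u1 - u3| ≤ |u1| + |u3| := abs_sub _ _
      have h2 := abs_nonneg u2
      nlinarith [sq_abs (u1-u3), abs_nonneg (u1-u3)]
  have e1 := le_abs_self u1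
  have e2 := le_abs_self u2
  have e3 := le_abs_self u3
  have hsl : 1-3*t ≤ u1+u2+u3 := by nlinarith
  have a1 : |u1| = u1 := by linarith
  have a2 : |u2| = u2 := by linarith
  have a3 : |u3| = u3 := by linarith
  have hn1 : 0 ≤ u1 := by rw [← a1]; exact abs_nonneg u1
  have hn2 : 0 ≤ u2 := by rw [← a2]; exact abs_nonneg u2
  have hn3 : 0 ≤ u3 := by rw [← a3]; exact abs_nonneg u3
  have hS : u1+u2+u3 = 1-3*t := by rw [← a1, ← a2, ← a3]; exact h
  have h3P : 3*(X^2+X*Y+Y^2) = (1-3*t)^2 := by nlinarith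
  have hm12 : (1-3*t)^2 ≤ (u2-u1)^2 ∨ (1-3*t)^2 ≤ (u2-u3)^2 ∨
      (1-3*t)^2 ≤ (u1-u3)^2 := by
    rcases aux_spread X Y with hs | hs | hs
    · left; rw [h21]; linarith
    · right; left; rw [h23]; linarith
    · right; right
      have he : (u1-u3)^2 = (X+2*Y)^2 := by rw [h13]; ring
      rw [he]; linarith
  clear hsum h21 h23 h13 h e1 e2 e3 hsl a1 a2 a3 hP h3P
  rcases hm12 with hs | hs | hs
  · have hz3 : u3 = 0 := by
      refine le_antisymm ?_ hn3
      nlinarith [mul_nonneg hn1 hn2, hs, hS, hn3, hmpos]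
    have hz12 : u1 * u2 = 0 := by
      refine le_antisymm ?_ (mul_nonneg hn1 hn2)
      nlinarith [hs, hS, hz3]
    rcases mul_eq_zero.mp hz12 with hz | hz
    · right; right; exact ⟨hz3, hz, hn2⟩
    · right; left; exact ⟨hz, hz3, hn1⟩
  · have hz1 : u1 = 0 := by
      refine le_antisymm ?_ hn1
      nlinarith [mul_nonneg hn2 hn3, hs, hS, hn1, hmpos]
    have hz23 : u2 * u3 = 0 := by
      refine le_antisymm ?_ (mul_nonneg hn2 hn3)
      nlinarith [hs, hS, hz1]
    rcases mul_eq_zero.mp hz23 with hz | hz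
    · left; exact ⟨hz1, hz, hn3⟩
    · right; right; exact ⟨hz, hz1, hn2⟩
  · have hz2 : u2 = 0 := by
      refine le_antisymm ?_ hn2
      nlinarith [mul_nonneg hn1 hn3, hs, hS, hn2, hmpos]
    have hz13 : u1 * u3 = 0 := by
      refine le_antisymm ?_ (mul_nonneg hn1 hn3)
      nlinarith [hs, hS, hz2]
    rcases mul_eq_zero.mp hz13 with hz | hz
    · left; exact ⟨hz, hz2, hn3⟩
    · right; left; exact ⟨hz2, hz, hn1⟩

private lemma coordsolve12 (t x y : ℝ)
    (h1 : x^2+x*y+y^2 = 3*t^2-3*t+1)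
    (h2 : (x-1)^2+(x-1)*y+y^2 = 3*t^2-3*t+1) :
    (x = t ∧ y = 1-2*t) ∨ (x = 1-t ∧ y = 2*t-1) := by
  have hy : 2*x + y - 1 = 0 := by linear_combination h1 - h2
  have hprod : (x-t)*(x+t-1) = 0 := by
    linear_combination (1/3)*h1 - ((y-x+1)/3)*hy
  rcases mul_eq_zero.mp hprod with hz | hz
  · left; constructor <;> linarith
  · right; constructor <;> linarith

private lemma coordsolve23 (t x y : ℝ)
    (h2 : (x-1)^2+(x-1)*y+y^2 = 3*t^2-3*t+1)
    (h3 : x^2+x*(y-1)+(y-1)^2 = 3*t^2-3*t+1) :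
    (x = t ∧ y = t) ∨ (x = 1-t ∧ y = 1-t) := by
  have hy : x - y = 0 := by linear_combination h3 - h2
  have hprod : (x-t)*(x+t-1) = 0 := by
    linear_combination (1/3)*h2 + ((2*x+y-1)/3)*hy
  rcases mul_eq_zero.mp hprod with hz | hz
  · left; constructor <;> linarith
  · right; constructor <;> linarith

private lemma coordsolve31 (t x y : ℝ)
    (h3 : x^2+x*(y-1)+(y-1)^2 = 3*t^2-3*t+1)
    (h1 : x^2+x*y+y^2 = 3*t^2-3*t+1) :
    (x = 1-2*t ∧ y = t) ∨ (x = 2*t-1 ∧ y = 1-t) := by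
  have hx : x + 2*y - 1 = 0 := by linear_combination h1 - h3
  have hprod : (y-t)*(y+t-1) = 0 := by
    linear_combination (1/3)*h1 - ((x-y+1)/3)*hx
  rcases mul_eq_zero.mp hprod with hz | hz
  · left; constructor <;> linarith
  · right; constructor <;> linarith

theorem stmt_7 (Z₁ Z₂ Z₃ S₁₂ S₂₃ S₃₁ : EuclideanSpace ℝ (Fin 2)) (r d : ℝ)
    (hr : 0 < r)
    (h12 : dist Z₁ Z₂ = r) (h23 : dist Z₂ Z₃ = r) (h31 : dist Z₃ Z₁ = r)
    (hdgt : r / Real.sqrt 3 < d)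
    (hS₁₂ : dist S₁₂ Z₁ = d ∧ dist S₁₂ Z₂ = d ∧
      ∀ P, dist P Z₁ = d → dist P Z₂ = d → dist S₁₂ Z₃ ≤ dist P Z₃)
    (hS₂₃ : dist S₂₃ Z₂ = d ∧ dist S₂₃ Z₃ = d ∧
      ∀ P, dist P Z₂ = d → dist P Z₃ = d → dist S₂₃ Z₁ ≤ dist P Z₁)
    (hS₃₁ : dist S₃₁ Z₃ = d ∧ dist S₃₁ Z₁ = d ∧
      ∀ P, dist P Z₃ = d → dist P Z₁ = d → dist S₃₁ Z₂ ≤ dist P Z₂)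
    (O : EuclideanSpace ℝ (Fin 2) → ℝ)
    (hO : ∀ W, O W = |d ^ 2 - dist W Z₁ ^ 2| + |d ^ 2 - dist W Z₂ ^ 2| +
      |d ^ 2 - dist W Z₃ ^ 2|) :
    {W | ∀ V, O W ≤ O V} = {S₁₂, S₂₃, S₃₁} := by
  obtain ⟨hd121, hd122, hmin12⟩ := hS₁₂
  obtain ⟨hd232, hd233, hmin23⟩ := hS₂₃
  obtain ⟨hd313, hd311, hmin31⟩ := hS₃₁
  -- basic positivity
  have h3pos : (0:ℝ) < Real.sqrt 3 := by positivity
  have hd0 : 0 < d := lt_trans (by positivity) hdgt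
  have hrd : r < d * Real.sqrt 3 := by
    rw [div_lt_iff₀ h3pos] at hdgt; exact hdgt
  have hdd : r^2/3 < d^2 := by
    have h1 : r^2 < (d*Real.sqrt 3)^2 := by
      apply pow_lt_pow_left₀ hrd hr.le
      norm_num
    rw [mul_pow, Real.sq_sqrt (by norm_num : (0:ℝ) ≤ 3)] at h1
    linarith
  have hr2 : (r:ℝ)^2 ≠ 0 := by positivity
  -- parameter t
  have h13 : 1/3 < d^2/r^2 := by
    rw [lt_div_iff₀ (by positivity : (0:ℝ) < r^2)]; linarith
  set y0 := Real.sqrt ((4*(d^2/r^2) - 1)/3) with hy0def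
  have harg : 0 < (4*(d^2/r^2)-1)/3 := by linarith
  have hy0sq : y0^2 = (4*(d^2/r^2)-1)/3 := Real.sq_sqrt harg.le
  set t := (1 - y0)/2 with htdef
  have hy013 : 1/3 < y0 := by
    rw [hy0def]
    rw [show ((1:ℝ)/3) = Real.sqrt ((1/3)^2) by rw [Real.sqrt_sq (by norm_num)]]
    apply Real.sqrt_lt_sqrt (by norm_num)
    linarith
  have ht : t < 1/3 := by rw [htdef]; linarith
  have hDt : d^2 = r^2*(3*t^2-3*t+1) := by
    have h4 : 3*t^2-3*t+1 = (1+3*y0^2)/4 := by rw [htdef]; ring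
    rw [h4, hy0sq]
    field_simp
    ring
  -- vectors
  set A := Z₂ - Z₁ with hA
  set B := Z₃ - Z₁ with hB
  have hAA : ⟪A, A⟫ = r^2 := by
    rw [real_inner_self_eq_norm_sq, hA, ← dist_eq_norm, dist_comm, h12]
  have hBB : ⟪B, B⟫ = r^2 := by
    rw [real_inner_self_eq_norm_sq, hB, ← dist_eq_norm, h31]
  have hABd : ‖A - B‖ = r := by
    have hab : A - B = Z₂ - Z₃ := by rw [hA, hB]; abel
    rw [hab, ← dist_eq_norm, h23]
  have hAB : ⟪A, B⟫ = r^2/2 := by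
    have h := real_inner_self_eq_norm_sq (A - B)
    rw [hABd] at h
    have h2 : ⟪A-B, A-B⟫ = ⟪A,A⟫ - 2*⟪A,B⟫ + ⟪B,B⟫ := by
      rw [inner_sub_sub_self, real_inner_comm B A]; ring
    rw [h2, hAA, hBB] at h; linarith
  have hBA : ⟪B, A⟫ = r^2/2 := by rw [real_inner_comm, hAB]
  -- norm formula
  have normsq : ∀ a b : ℝ, ‖a • A + b • B‖^2 = r^2*(a^2 + a*b + b^2) := by
    intro a b
    rw [← real_inner_self_eq_norm_sq]
    simp only [inner_add_add_self, real_inner_smul_left, real_inner_smul_right,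
      hAA, hBB, hAB, hBA]
    ring
  -- coordinates exist
  have hBne : B ≠ 0 := by
    intro h0
    rw [h0, inner_zero_left] at hBB
    exact hr2 hBB.symm
  have hli : LinearIndependent ℝ ![A, B] := by
    rw [linearIndependent_fin2]
    refine ⟨by simpa using hBne, fun a hEq => ?_⟩
    have h1 : ⟪A - a • B, A - a • B⟫ = r^2*(a^2 - a + 1) := by
      simp only [inner_sub_sub_self, real_inner_smul_left, real_inner_smul_right,
        hAA, hBB, hAB, hBA]
      ring
    simp only [Matrix.cons_val_one, Matrix.head_cons, Matrix.cons_val_zero] at hEq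
    rw [hEq] at h1
    simp at h1
    rcases h1 with h1 | h1
    · exact absurd h1 (ne_of_gt hr)
    · linarith [sq_nonneg (2*a-1)]
  have hcoord : ∀ P : EuclideanSpace ℝ (Fin 2), ∃ x y : ℝ, P = Z₁ + x • A + y • B := by
    have hcard : Fintype.card (Fin 2) = Module.finrank ℝ (EuclideanSpace ℝ (Fin 2)) := by
      simp [finrank_euclideanSpace_fin]
    let b := basisOfLinearIndependentOfCardEqFinrank hli hcard
    have hb0 : b 0 = A := by
      simp [b, coe_basisOfLinearIndependentOfCardEqFinrank]
    have hb1 : b 1 = B := by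
      simp [b, coe_basisOfLinearIndependentOfCardEqFinrank]
    intro P
    refine ⟨b.repr (P - Z₁) 0, b.repr (P - Z₁) 1, ?_⟩
    have h := b.sum_repr (P - Z₁)
    rw [Fin.sum_univ_two, hb0, hb1] at h
    calc P = Z₁ + (P - Z₁) := by abel
      _ = Z₁ + ((b.repr (P - Z₁)) 0 • A + (b.repr (P - Z₁)) 1 • B) := by rw [h]
      _ = Z₁ + (b.repr (P - Z₁)) 0 • A + (b.repr (P - Z₁)) 1 • B := by abel
  -- distance formula
  have distsq : ∀ (P Q : EuclideanSpace ℝ (Fin 2)) (xp yp xq yq : ℝ),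
      P = Z₁ + xp • A + yp • B → Q = Z₁ + xq • A + yq • B →
      dist P Q ^2 = r^2*((xp-xq)^2+(xp-xq)*(yp-yq)+(yp-yq)^2) := by
    intro P Q xp yp xq yq hP hQ
    have hPQ : P - Q = (xp - xq) • A + (yp - yq) • B := by
      rw [hP, hQ]; module
    rw [dist_eq_norm, hPQ, normsq]
  have hZ1 : Z₁ = Z₁ + (0:ℝ) • A + (0:ℝ) • B := by module
  have hZ2 : Z₂ = Z₁ + (1:ℝ) • A + (0:ℝ) • B := by rw [hA]; module
  have hZ3 : Z₃ = Z₁ + (0:ℝ) • A + (1:ℝ) • B := by rw [hB]; module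
  -- dist to d conversion
  have dist_eq_d : ∀ (P Q : EuclideanSpace ℝ (Fin 2)), dist P Q ^2 = d^2 → dist P Q = d := by
    intro P Q h
    exact (sq_eq_sq₀ dist_nonneg hd0.le).mp h
  -- candidate points
  set P12 := Z₁ + t • A + (1-2*t) • B with hP12
  set P23 := Z₁ + t • A + t • B with hP23
  set P31 := Z₁ + (1-2*t) • A + t • B with hP31
  have hP12Z1 : dist P12 Z₁ = d := by
    apply dist_eq_d
    rw [distsq P12 Z₁ t (1-2*t) 0 0 hP12 hZ1, hDt]; ring
  have hP12Z2 : dist P12 Z₂ = d := by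
    apply dist_eq_d
    rw [distsq P12 Z₂ t (1-2*t) 1 0 hP12 hZ2, hDt]; ring
  have hP12Z3 : dist P12 Z₃ ^2 = r^2*(3*t^2) := by
    rw [distsq P12 Z₃ t (1-2*t) 0 1 hP12 hZ3]; ring
  have hP23Z2 : dist P23 Z₂ = d := by
    apply dist_eq_d
    rw [distsq P23 Z₂ t t 1 0 hP23 hZ2, hDt]; ring
  have hP23Z3 : dist P23 Z₃ = d := by
    apply dist_eq_d
    rw [distsq P23 Z₃ t t 0 1 hP23 hZ3, hDt]; ring
  have hP23Z1 : dist P23 Z₁ ^2 = r^2*(3*t^2) := by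
    rw [distsq P23 Z₁ t t 0 0 hP23 hZ1]; ring
  have hP31Z3 : dist P31 Z₃ = d := by
    apply dist_eq_d
    rw [distsq P31 Z₃ (1-2*t) t 0 1 hP31 hZ3, hDt]; ring
  have hP31Z1 : dist P31 Z₁ = d := by
    apply dist_eq_d
    rw [distsq P31 Z₁ (1-2*t) t 0 0 hP31 hZ1, hDt]; ring
  have hP31Z2 : dist P31 Z₂ ^2 = r^2*(3*t^2) := by
    rw [distsq P31 Z₂ (1-2*t) t 1 0 hP31 hZ2]; ring
  -- identify the three S points
  have hS12c : S₁₂ = P12 := by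
    obtain ⟨x, y, hxy⟩ := hcoord S₁₂
    have e1 : x^2+x*y+y^2 = 3*t^2-3*t+1 := by
      have h := distsq S₁₂ Z₁ x y 0 0 hxy hZ1
      rw [hd121, hDt] at h
      apply mul_left_cancel₀ hr2
      linear_combination -h
    have e2 : (x-1)^2+(x-1)*y+y^2 = 3*t^2-3*t+1 := by
      have h := distsq S₁₂ Z₂ x y 1 0 hxy hZ2
      rw [hd122, hDt] at h
      apply mul_left_cancel₀ hr2
      linear_combination -h
    rcases coordsolve12 t x y e1 e2 with ⟨hx, hy⟩ | ⟨hx, hy⟩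
    · rw [hxy, hx, hy, hP12]
    · exfalso
      have hq3 : dist S₁₂ Z₃ ^2 = r^2*(3*(1-t)^2) := by
        rw [distsq S₁₂ Z₃ x y 0 1 hxy hZ3, hx, hy]; ring
      have hle := hmin12 P12 hP12Z1 hP12Z2
      have hle2 := pow_le_pow_left₀ dist_nonneg hle 2
      rw [hq3, hP12Z3] at hle2
      have hpos : 0 < r^2*(1-2*t) := mul_pos (by positivity) (by linarith)
      linarith [hle2, hpos]
  have hS23c : S₂₃ = P23 := by
    obtain ⟨x, y, hxy⟩ := hcoord S₂₃
    have e2 : (x-1)^2+(x-1)*y+y^2 = 3*t^2-3*t+1 := by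
      have h := distsq S₂₃ Z₂ x y 1 0 hxy hZ2
      rw [hd232, hDt] at h
      apply mul_left_cancel₀ hr2
      linear_combination -h
    have e3 : x^2+x*(y-1)+(y-1)^2 = 3*t^2-3*t+1 := by
      have h := distsq S₂₃ Z₃ x y 0 1 hxy hZ3
      rw [hd233, hDt] at h
      apply mul_left_cancel₀ hr2
      linear_combination -h
    rcases coordsolve23 t x y e2 e3 with ⟨hx, hy⟩ | ⟨hx, hy⟩
    · rw [hxy, hx, hy, hP23]
    · exfalso
      have hq1 : dist S₂₃ Z₁ ^2 = r^2*(3*(1-t)^2) := by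
        rw [distsq S₂₃ Z₁ x y 0 0 hxy hZ1, hx, hy]; ring
      have hle := hmin23 P23 hP23Z2 hP23Z3
      have hle2 := pow_le_pow_left₀ dist_nonneg hle 2
      rw [hq1, hP23Z1] at hle2
      have hpos : 0 < r^2*(1-2*t) := mul_pos (by positivity) (by linarith)
      linarith [hle2, hpos]
  have hS31c : S₃₁ = P31 := by
    obtain ⟨x, y, hxy⟩ := hcoord S₃₁
    have e3 : x^2+x*(y-1)+(y-1)^2 = 3*t^2-3*t+1 := by
      have h := distsq S₃₁ Z₃ x y 0 1 hxy hZ3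
      rw [hd313, hDt] at h
      apply mul_left_cancel₀ hr2
      linear_combination -h
    have e1 : x^2+x*y+y^2 = 3*t^2-3*t+1 := by
      have h := distsq S₃₁ Z₁ x y 0 0 hxy hZ1
      rw [hd311, hDt] at h
      apply mul_left_cancel₀ hr2
      linear_combination -h
    rcases coordsolve31 t x y e3 e1 with ⟨hx, hy⟩ | ⟨hx, hy⟩
    · rw [hxy, hx, hy, hP31]
    · exfalso
      have hq2 : dist S₃₁ Z₂ ^2 = r^2*(3*(1-t)^2) := by
        rw [distsq S₃₁ Z₂ x y 1 0 hxy hZ2, hx, hy]; ring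
      have hle := hmin31 P31 hP31Z3 hP31Z1
      have hle2 := pow_le_pow_left₀ dist_nonneg hle 2
      rw [hq2, hP31Z2] at hle2
      have hpos : 0 < r^2*(1-2*t) := mul_pos (by positivity) (by linarith)
      linarith [hle2, hpos]
  -- O in coordinates
  have habsO : ∀ (V : EuclideanSpace ℝ (Fin 2)) (x y : ℝ), V = Z₁ + x • A + y • B →
      O V = r^2 * (|(3*t^2-3*t+1) - (x^2+x*y+y^2)|
        + |(3*t^2-3*t+1) - ((x-1)^2+(x-1)*y+y^2)|
        + |(3*t^2-3*t+1) - (x^2+x*(y-1)+(y-1)^2)|) := by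
    intro V x y hv
    rw [hO]
    have q1 : dist V Z₁^2 = r^2*(x^2+x*y+y^2) := by
      rw [distsq V Z₁ x y 0 0 hv hZ1]; ring
    have q2 : dist V Z₂^2 = r^2*((x-1)^2+(x-1)*y+y^2) := by
      rw [distsq V Z₂ x y 1 0 hv hZ2]; ring
    have q3 : dist V Z₃^2 = r^2*(x^2+x*(y-1)+(y-1)^2) := by
      rw [distsq V Z₃ x y 0 1 hv hZ3]; ring
    have e1 : d^2 - dist V Z₁^2 = r^2*((3*t^2-3*t+1) - (x^2+x*y+y^2)) := by
      rw [q1, hDt]; ring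
    have e2 : d^2 - dist V Z₂^2 = r^2*((3*t^2-3*t+1) - ((x-1)^2+(x-1)*y+y^2)) := by
      rw [q2, hDt]; ring
    have e3 : d^2 - dist V Z₃^2 = r^2*((3*t^2-3*t+1) - (x^2+x*(y-1)+(y-1)^2)) := by
      rw [q3, hDt]; ring
    rw [e1, e2, e3, abs_mul, abs_mul, abs_mul, abs_of_nonneg (sq_nonneg r)]
    ring
  -- lower bound
  have hlow : ∀ V, r^2*(1-3*t) ≤ O V := by
    intro V
    obtain ⟨x, y, hv⟩ := hcoord V
    rw [habsO V x y hv]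
    have hi := core_ineq t ((3*t^2-3*t+1) - (x^2+x*y+y^2))
      ((3*t^2-3*t+1) - ((x-1)^2+(x-1)*y+y^2))
      ((3*t^2-3*t+1) - (x^2+x*(y-1)+(y-1)^2))
      (x-1/3) (y-1/3) ht (by ring) (by ring) (by ring) (by ring)
    exact mul_le_mul_of_nonneg_left hi (sq_nonneg r)
  -- O values at S points
  have hm0 : (0:ℝ) ≤ r^2*(1-3*t) := mul_nonneg (sq_nonneg r) (by linarith)
  have hOS12 : O S₁₂ = r^2*(1-3*t) := by
    rw [hO S₁₂, hd121, hd122]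
    have h3 : dist S₁₂ Z₃ ^2 = r^2*(3*t^2) := by rw [hS12c]; exact hP12Z3
    rw [h3, sub_self, abs_zero, hDt,
      show r^2*(3*t^2-3*t+1) - r^2*(3*t^2) = r^2*(1-3*t) by ring,
      abs_of_nonneg hm0]
    ring
  have hOS23 : O S₂₃ = r^2*(1-3*t) := by
    rw [hO S₂₃, hd232, hd233]
    have h1 : dist S₂₃ Z₁ ^2 = r^2*(3*t^2) := by rw [hS23c]; exact hP23Z1
    rw [h1, sub_self, abs_zero, hDt,
      show r^2*(3*t^2-3*t+1) - r^2*(3*t^2) = r^2*(1-3*t) by ring,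
      abs_of_nonneg hm0]
    ring
  have hOS31 : O S₃₁ = r^2*(1-3*t) := by
    rw [hO S₃₁, hd313, hd311]
    have h2 : dist S₃₁ Z₂ ^2 = r^2*(3*t^2) := by rw [hS31c]; exact hP31Z2
    rw [h2, sub_self, abs_zero, hDt,
      show r^2*(3*t^2-3*t+1) - r^2*(3*t^2) = r^2*(1-3*t) by ring,
      abs_of_nonneg hm0]
    ring
  -- conclusion
  ext W
  simp only [Set.mem_setOf_eq, Set.mem_insert_iff, Set.mem_singleton_iff]
  constructor
  · intro hW
    obtain ⟨x, y, hv⟩ := hcoord W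
    have hub : O W ≤ r^2*(1-3*t) := by rw [← hOS12]; exact hW S₁₂
    have heq : O W = r^2*(1-3*t) := le_antisymm hub (hlow W)
    rw [habsO W x y hv] at heq
    have hsum : |(3*t^2-3*t+1) - (x^2+x*y+y^2)|
        + |(3*t^2-3*t+1) - ((x-1)^2+(x-1)*y+y^2)|
        + |(3*t^2-3*t+1) - (x^2+x*(y-1)+(y-1)^2)| = 1-3*t :=
      mul_left_cancel₀ hr2 heq
    rcases core_eq t ((3*t^2-3*t+1) - (x^2+x*y+y^2))
        ((3*t^2-3*t+1) - ((x-1)^2+(x-1)*y+y^2))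
        ((3*t^2-3*t+1) - (x^2+x*(y-1)+(y-1)^2))
        (x-1/3) (y-1/3) ht (by ring) (by ring) (by ring) (by ring) hsum with
      ⟨z1, z2, z3⟩ | ⟨z1, z2, z3⟩ | ⟨z1, z2, z3⟩
    · have e1 : x^2+x*y+y^2 = 3*t^2-3*t+1 := by linarith [z1]
      have e2 : (x-1)^2+(x-1)*y+y^2 = 3*t^2-3*t+1 := by linarith [z2]
      rcases coordsolve12 t x y e1 e2 with ⟨hx, hy⟩ | ⟨hx, hy⟩
      · left; rw [hv, hx, hy, hS12c, hP12]
      · exfalso; rw [hx, hy] at z3; linarith [z3]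
    · have e2 : (x-1)^2+(x-1)*y+y^2 = 3*t^2-3*t+1 := by linarith [z1]
      have e3 : x^2+x*(y-1)+(y-1)^2 = 3*t^2-3*t+1 := by linarith [z2]
      rcases coordsolve23 t x y e2 e3 with ⟨hx, hy⟩ | ⟨hx, hy⟩
      · right; left; rw [hv, hx, hy, hS23c, hP23]
      · exfalso; rw [hx, hy] at z3; linarith [z3]
    · have e3 : x^2+x*(y-1)+(y-1)^2 = 3*t^2-3*t+1 := by linarith [z1]
      have e1 : x^2+x*y+y^2 = 3*t^2-3*t+1 := by linarith [z2]
      rcases coordsolve31 t x y e3 e1 with ⟨hx, hy⟩ | ⟨hx, hy⟩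
      · right; right; rw [hv, hx, hy, hS31c, hP31]
      · exfalso; rw [hx, hy] at z3; linarith [z3]
  · intro h
    rcases h with rfl | rfl | rfl
    · intro V; rw [hOS12]; exact hlow V
    · intro V; rw [hOS23]; exact hlow V
    · intro V; rw [hOS31]; exact hlow V
end

section
/- Suppose ||Z_1 - Z_3|| = ||Z_2 - Z_3||, d_1 = d_2, d_3² = d_1² - ||Z_1 - Z_3||², and d_1 > ||Z_1 - Z_3||. Writing r = ||Z_1 - Z_2|| and s the distance from Z_3 to the midpoint of Z_1 Z_2, the objective value at the intersection point S_{12+} of circles S_1 and S_2 closest to Z_3 is O(S_{12+}) = -2s² + 2s·sqrt(d_3² + s²), and at the farthest intersection point O(S_{12-}) = 2s² + 2s·sqrt(d_3² + s²). -/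
open scoped RealInnerProductSpace

private lemma aux_eq_of_sq {a b : ℝ} (ha : 0 ≤ a) (hb : 0 ≤ b) (h : a ^ 2 = b ^ 2) :
    a = b := by nlinarith

private lemma aux_orth_sub {E : Type*} [NormedAddCommGroup E] [InnerProductSpace ℝ E]
    {a b : E} (h : ⟪a, b⟫ = 0) : ‖a - b‖ ^ 2 = ‖a‖ ^ 2 + ‖b‖ ^ 2 := by
  have := norm_sub_sq_real a b; rw [h] at this; linarith

private lemma aux_orth_add {E : Type*} [NormedAddCommGroup E] [InnerProductSpace ℝ E]
    {a b : E} (h : ⟪a, b⟫ = 0) : ‖a + b‖ ^ 2 = ‖a‖ ^ 2 + ‖b‖ ^ 2 := by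
  have := norm_add_sq_real a b; rw [h] at this; linarith

private lemma aux_inner_zero {E : Type*} [NormedAddCommGroup E] [InnerProductSpace ℝ E]
    {a b : E} (h : ‖b - a‖ = ‖-b - a‖) : ⟪a, b⟫ = 0 := by
  have h2 : ‖b - a‖ ^ 2 = ‖-b - a‖ ^ 2 := by rw [h]
  have e1 := norm_sub_sq_real b a
  have e2 := norm_sub_sq_real (-b) a
  rw [norm_neg, inner_neg_left] at e2
  rw [real_inner_comm]
  nlinarith

private lemma aux_two_circles {E : Type*} [NormedAddCommGroup E] [InnerProductSpace ℝ E]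
    {x v : E} {d : ℝ} (h1 : ‖x - v‖ = d) (h2 : ‖x + v‖ = d) :
    ‖x‖ ^ 2 = d ^ 2 - ‖v‖ ^ 2 := by
  have q1 := norm_sub_sq_real x v
  have q2 := norm_add_sq_real x v
  rw [h1] at q1; rw [h2] at q2
  nlinarith

set_option maxHeartbeats 1000000 in
theorem stmt_8 (Z₁ Z₂ Z₃ S₁₂p S₁₂m : EuclideanSpace ℝ (Fin 2)) (d₁ d₂ d₃ r s : ℝ)
    (hiso : dist Z₁ Z₃ = dist Z₂ Z₃) (hd : d₁ = d₂)
    (hd₁ : dist Z₁ Z₃ < d₁) (hd₃ : 0 ≤ d₃)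
    (hrel : d₃ ^ 2 = d₁ ^ 2 - dist Z₁ Z₃ ^ 2)
    (hr : r = dist Z₁ Z₂) (hs : s = dist Z₃ ((2 : ℝ)⁻¹ • (Z₁ + Z₂)))
    (hp₁ : dist S₁₂p Z₁ = d₁) (hp₂ : dist S₁₂p Z₂ = d₂)
    (hm₁ : dist S₁₂m Z₁ = d₁) (hm₂ : dist S₁₂m Z₂ = d₂)
    (hpmin : ∀ P, dist P Z₁ = d₁ → dist P Z₂ = d₂ → dist Z₃ S₁₂p ≤ dist Z₃ P)
    (hmmax : ∀ P, dist P Z₁ = d₁ → dist P Z₂ = d₂ → dist Z₃ P ≤ dist Z₃ S₁₂m)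
    (O : EuclideanSpace ℝ (Fin 2) → ℝ)
    (hO : ∀ W, O W = |d₁ ^ 2 - dist W Z₁ ^ 2| + |d₂ ^ 2 - dist W Z₂ ^ 2| +
      |d₃ ^ 2 - dist W Z₃ ^ 2|) :
    O S₁₂p = -2 * s ^ 2 + 2 * s * Real.sqrt (d₃ ^ 2 + s ^ 2) ∧
    O S₁₂m = 2 * s ^ 2 + 2 * s * Real.sqrt (d₃ ^ 2 + s ^ 2) := by
  have hd1pos : (0:ℝ) < d₁ := lt_of_le_of_lt dist_nonneg hd₁
  set M : EuclideanSpace ℝ (Fin 2) := (2 : ℝ)⁻¹ • (Z₁ + Z₂) with hM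
  set u : EuclideanSpace ℝ (Fin 2) := Z₃ - M with hu
  set v : EuclideanSpace ℝ (Fin 2) := Z₁ - M with hv
  have hZ1 : Z₁ - Z₃ = v - u := by simp only [hu, hv]; abel
  have hZ2 : Z₂ - Z₃ = -v - u := by simp only [hu, hv, hM]; module
  have hsu : s = ‖u‖ := by rw [hs, dist_eq_norm, hu]
  have hsnn : 0 ≤ s := by rw [hsu]; exact norm_nonneg u
  -- orthogonality
  have hinner : ⟪u, v⟫ = 0 := by
    refine aux_inner_zero ?_
    rw [← hZ1, ← hZ2, ← dist_eq_norm, ← dist_eq_norm]; exact hiso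
  have hvu : ⟪v, u⟫ = 0 := by rw [real_inner_comm]; exact hinner
  have hZ13 : dist Z₁ Z₃ ^ 2 = s ^ 2 + ‖v‖ ^ 2 := by
    rw [dist_eq_norm, hZ1, aux_orth_sub hvu, hsu]; ring
  set t : ℝ := Real.sqrt (d₃ ^ 2 + s ^ 2) with ht
  have ht2 : t ^ 2 = d₃ ^ 2 + s ^ 2 := Real.sq_sqrt (by positivity)
  have htnn : 0 ≤ t := Real.sqrt_nonneg _
  have hst : s ≤ t := (Real.le_sqrt hsnn (by positivity)).mpr (by linarith [sq_nonneg d₃])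
  have htv : t ^ 2 = d₁ ^ 2 - ‖v‖ ^ 2 := by rw [ht2, hrel, hZ13]; ring
  -- any point on both circles is at distance t from M
  have hcirc : ∀ P : EuclideanSpace ℝ (Fin 2),
      dist P Z₁ = d₁ → dist P Z₂ = d₁ → ‖P - M‖ = t := by
    intro P h1 h2
    have e1 : P - Z₁ = (P - M) - v := by simp only [hv]; abel
    have e2 : P - Z₂ = (P - M) + v := by simp only [hv, hM]; module
    have n1 : ‖(P - M) - v‖ = d₁ := by rw [← e1, ← dist_eq_norm]; exact h1
    have n2 : ‖(P - M) + v‖ = d₁ := by rw [← e2, ← dist_eq_norm]; exact h2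
    have hsq : ‖P - M‖ ^ 2 = t ^ 2 := by
      rw [aux_two_circles n1 n2, htv]
    exact aux_eq_of_sq (norm_nonneg _) htnn hsq
  have hMp : ‖S₁₂p - M‖ = t := hcirc S₁₂p hp₁ (hd ▸ hp₂)
  have hMm : ‖S₁₂m - M‖ = t := hcirc S₁₂m hm₁ (hd ▸ hm₂)
  have hMZ₃ : dist M Z₃ = s := by rw [dist_comm, dist_eq_norm, ← hu, hsu]
  have hMps : dist M S₁₂p = t := by
    rw [dist_eq_norm, norm_sub_rev]; exact hMp
  have hMms : dist M S₁₂m = t := by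
    rw [dist_eq_norm, norm_sub_rev]; exact hMm
  have low_p : t - s ≤ dist Z₃ S₁₂p := by
    have h3 := dist_triangle M Z₃ S₁₂p
    rw [hMZ₃, hMps] at h3; linarith
  have up_m : dist Z₃ S₁₂m ≤ t + s := by
    have h3 := dist_triangle Z₃ M S₁₂m
    rw [dist_comm Z₃ M, hMZ₃, hMms] at h3; linarith
  -- witnesses for the other bounds
  have hwitness : ∀ c : ℝ, |c| * s = t →
      (dist (M + c • u) Z₁ = d₁ ∧ dist (M + c • u) Z₂ = d₂) := by
    intro c hcs
    have hcu : ‖c • u‖ = t := by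
      rw [norm_smul, Real.norm_eq_abs, ← hsu]; exact hcs
    have hin : ⟪c • u, v⟫ = 0 := by rw [real_inner_smul_left, hinner]; ring
    have key : ∀ w : EuclideanSpace ℝ (Fin 2),
        w = c • u - v ∨ w = c • u + v → ‖w‖ = d₁ := by
      intro w hw
      have hsq : ‖w‖ ^ 2 = d₁ ^ 2 := by
        rcases hw with hw | hw
        · rw [hw, aux_orth_sub hin, hcu, htv]; ring
        · rw [hw, aux_orth_add hin, hcu, htv]; ring
      exact aux_eq_of_sq (norm_nonneg w) hd1pos.le hsq
    constructor
    · rw [dist_eq_norm]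
      have e : M + c • u - Z₁ = c • u - v := by simp only [hv]; abel
      rw [e]; exact key _ (Or.inl rfl)
    · rw [dist_eq_norm, ← hd]
      have e : M + c • u - Z₂ = c • u + v := by simp only [hv, hM]; module
      rw [e]; exact key _ (Or.inr rfl)
  have up_p : dist Z₃ S₁₂p ≤ t - s := by
    rcases eq_or_lt_of_le hsnn with h0 | hspos
    · have hZ₃M : Z₃ = M := by
        have : dist Z₃ M = 0 := by rw [dist_comm, hMZ₃, ← h0]
        exact dist_eq_zero.mp this
      rw [hZ₃M, ← h0, sub_zero, dist_eq_norm, norm_sub_rev]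
      exact hMp.le
    · have hcs : (t / s) * s = t := div_mul_cancel₀ t hspos.ne'
      obtain ⟨hP1, hP2⟩ := hwitness (t / s)
        (by rw [abs_of_nonneg (by positivity)]; exact hcs)
      have hc1 : 1 ≤ t / s := (one_le_div hspos).mpr hst
      have hPd : dist Z₃ (M + (t / s) • u) = t - s := by
        rw [dist_eq_norm]
        have e : Z₃ - (M + (t / s) • u) = (1 - t / s) • u := by
          simp only [hu]; module
        rw [e, norm_smul, Real.norm_eq_abs, abs_of_nonpos (by linarith), ← hsu]
        linear_combination hcs
      calc dist Z₃ S₁₂p ≤ dist Z₃ (M + (t / s) • u) := hpmin _ hP1 hP2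
        _ = t - s := hPd
  have low_m : t + s ≤ dist Z₃ S₁₂m := by
    rcases eq_or_lt_of_le hsnn with h0 | hspos
    · have hZ₃M : Z₃ = M := by
        have : dist Z₃ M = 0 := by rw [dist_comm, hMZ₃, ← h0]
        exact dist_eq_zero.mp this
      rw [hZ₃M, ← h0, add_zero, dist_eq_norm, norm_sub_rev]
      exact hMm.ge
    · have hcs : (t / s) * s = t := div_mul_cancel₀ t hspos.ne'
      obtain ⟨hP1, hP2⟩ := hwitness (-(t / s))
        (by rw [abs_neg, abs_of_nonneg (by positivity)]; exact hcs)
      have hc1 : 1 ≤ t / s := (one_le_div hspos).mpr hst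
      have hPd : dist Z₃ (M + (-(t / s)) • u) = t + s := by
        rw [dist_eq_norm]
        have e : Z₃ - (M + (-(t / s)) • u) = (1 + t / s) • u := by
          simp only [hu]; module
        rw [e, norm_smul, Real.norm_eq_abs, abs_of_nonneg (by linarith), ← hsu]
        linear_combination hcs
      calc t + s = dist Z₃ (M + (-(t / s)) • u) := hPd.symm
        _ ≤ dist Z₃ S₁₂m := hmmax _ hP1 hP2
  have dp : dist Z₃ S₁₂p = t - s := le_antisymm up_p low_p
  have dm : dist Z₃ S₁₂m = t + s := le_antisymm up_m low_m
  have habs1 : |d₃ ^ 2 - (t - s) ^ 2| = 2 * s * t - 2 * s ^ 2 := by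
    have e : d₃ ^ 2 - (t - s) ^ 2 = 2 * (s * (t - s)) := by linear_combination -ht2
    rw [e, abs_of_nonneg (by have := mul_nonneg hsnn (sub_nonneg.2 hst); linarith)]
    ring
  have habs2 : |d₃ ^ 2 - (t + s) ^ 2| = 2 * s * t + 2 * s ^ 2 := by
    have e : d₃ ^ 2 - (t + s) ^ 2 = -(2 * (s * (t + s))) := by linear_combination -ht2
    rw [e, abs_neg, abs_of_nonneg (by positivity)]
    ring
  constructor
  · rw [hO, hp₁, hp₂, dist_comm S₁₂p Z₃, dp, habs1]
    simp only [sub_self, abs_zero]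
    ring
  · rw [hO, hm₁, hm₂, dist_comm S₁₂m Z₃, dm, habs2]
    simp only [sub_self, abs_zero]
    ring
end

section
/- Suppose S_{12+}, S_{23+}, S_{31+} ∈ ℝ² all lie inside or on all three disks (i.e., ||S_{ij+} - Z_k|| ≤ d_k for all k), each S_{ij+} lies on circles S_i and S_j, and O(S_{12+}) = O(S_{23+}) = O(S_{31+}). Then ||S_{12+} - Y_0|| = ||S_{23+} - Y_0|| = ||S_{31+} - Y_0||, where Y_0 = (Z_1 + Z_2 + Z_3)/3. -/
open RealInnerProductSpace

lemma key_sum (Z₁ Z₂ Z₃ Y₀ W : EuclideanSpace ℝ (Fin 2))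
    (hY₀ : Y₀ = (3 : ℝ)⁻¹ • (Z₁ + Z₂ + Z₃)) :
    dist W Z₁ ^ 2 + dist W Z₂ ^ 2 + dist W Z₃ ^ 2 =
      3 * dist W Y₀ ^ 2 + (‖Z₁‖ ^ 2 + ‖Z₂‖ ^ 2 + ‖Z₃‖ ^ 2 - 3 * ‖Y₀‖ ^ 2) := by
  subst hY₀
  simp only [dist_eq_norm, ← real_inner_self_eq_norm_sq,
    inner_sub_left, inner_sub_right, inner_add_left, inner_add_right,
    real_inner_smul_left, real_inner_smul_right, real_inner_comm W Z₁,
    real_inner_comm W Z₂, real_inner_comm W Z₃]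
  ring


theorem stmt_13 (Z₁ Z₂ Z₃ S₁₂p S₂₃p S₃₁p Y₀ : EuclideanSpace ℝ (Fin 2))
    (d₁ d₂ d₃ : ℝ) (hd₁ : 0 < d₁) (hd₂ : 0 < d₂) (hd₃ : 0 < d₃)
    (hY₀ : Y₀ = (3 : ℝ)⁻¹ • (Z₁ + Z₂ + Z₃))
    (h12R : dist S₁₂p Z₁ ≤ d₁ ∧ dist S₁₂p Z₂ ≤ d₂ ∧ dist S₁₂p Z₃ ≤ d₃)
    (h23R : dist S₂₃p Z₁ ≤ d₁ ∧ dist S₂₃p Z₂ ≤ d₂ ∧ dist S₂₃p Z₃ ≤ d₃)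
    (h31R : dist S₃₁p Z₁ ≤ d₁ ∧ dist S₃₁p Z₂ ≤ d₂ ∧ dist S₃₁p Z₃ ≤ d₃)
    (h12 : dist S₁₂p Z₁ = d₁ ∧ dist S₁₂p Z₂ = d₂)
    (h23 : dist S₂₃p Z₂ = d₂ ∧ dist S₂₃p Z₃ = d₃)
    (h31 : dist S₃₁p Z₃ = d₃ ∧ dist S₃₁p Z₁ = d₁)
    (O : EuclideanSpace ℝ (Fin 2) → ℝ)
    (hO : ∀ W, O W = |d₁ ^ 2 - dist W Z₁ ^ 2| + |d₂ ^ 2 - dist W Z₂ ^ 2| +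
      |d₃ ^ 2 - dist W Z₃ ^ 2|)
    (heq : O S₁₂p = O S₂₃p ∧ O S₂₃p = O S₃₁p) :
    dist S₁₂p Y₀ = dist S₂₃p Y₀ ∧ dist S₂₃p Y₀ = dist S₃₁p Y₀ := by
  have habs : ∀ (d : ℝ) (t : ℝ), 0 ≤ t → t ≤ d → |d ^ 2 - t ^ 2| = d ^ 2 - t ^ 2 := by
    intro d t ht hle
    exact abs_of_nonneg (by nlinarith)
  have hOval : ∀ W, dist W Z₁ ≤ d₁ → dist W Z₂ ≤ d₂ → dist W Z₃ ≤ d₃ →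
      O W = d₁ ^ 2 + d₂ ^ 2 + d₃ ^ 2 -
        (3 * dist W Y₀ ^ 2 + (‖Z₁‖ ^ 2 + ‖Z₂‖ ^ 2 + ‖Z₃‖ ^ 2 - 3 * ‖Y₀‖ ^ 2)) := by
    intro W h1 h2 h3
    rw [hO W, habs _ _ dist_nonneg h1, habs _ _ dist_nonneg h2, habs _ _ dist_nonneg h3,
      ← key_sum Z₁ Z₂ Z₃ Y₀ W hY₀]
    ring
  obtain ⟨a1, a2, a3⟩ := h12R
  obtain ⟨b1, b2, b3⟩ := h23R
  obtain ⟨c1, c2, c3⟩ := h31R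
  have e1 := hOval _ a1 a2 a3
  have e2 := hOval _ b1 b2 b3
  have e3 := hOval _ c1 c2 c3
  obtain ⟨q1, q2⟩ := heq
  rw [e1, e2] at q1
  rw [e2, e3] at q2
  have s1 : dist S₁₂p Y₀ ^ 2 = dist S₂₃p Y₀ ^ 2 := by linarith
  have s2 : dist S₂₃p Y₀ ^ 2 = dist S₃₁p Y₀ ^ 2 := by linarith
  constructor
  · exact sq_eq_sq₀ dist_nonneg dist_nonneg |>.mp s1
  · exact sq_eq_sq₀ dist_nonneg dist_nonneg |>.mp s2
end

section
/- Let r, s, u > 0 and set |Z_1Z_3|² = s² + r²/4. For t ∈ [0,1] define g(t) = (2s/(s² + r²/4)) · ( -u((s² - r²/4)t + r²/2) + r·sqrt( -s²u²t² + 2su(s² + r²/4 + su)t + r²u²/4 ) ). Then g(0) = 0, g is strictly concave on [0,1], and g(1) > 0 if and only if s ≤ (√3/2) r or u < 2r²s/(s² - 3r²/4); g(1) = 0 if and only if s > (√3/2) r and u = 2r²s/(s² - 3r²/4); g(1) < 0 if and only if s > (√3/2) r and u > 2r²s/(s² - 3r²/4). -/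
private lemma aux_concave_sqrt (A B C c r : ℝ) (hA : 0 < A) (hc : 0 < c) (hr : 0 < r)
    (hq : ∀ t ∈ Set.Icc (0:ℝ) 1, 0 ≤ -(A * t ^ 2) + B * t + C) (m b0 : ℝ) :
    StrictConcaveOn ℝ (Set.Icc (0 : ℝ) 1)
      (fun t => c * (m * t + b0 + r * Real.sqrt (-(A * t ^ 2) + B * t + C))) := by
  constructor
  · exact convex_Icc 0 1
  · intro x hx y hy hxy a b ha hb hab
    simp only [smul_eq_mul]
    have hb1 : b = 1 - a := by linarith
    subst hb1
    have hPx : Real.sqrt (-(A * x ^ 2) + B * x + C) ^ 2 = -(A * x ^ 2) + B * x + C :=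
      Real.sq_sqrt (hq x hx)
    have hQy : Real.sqrt (-(A * y ^ 2) + B * y + C) ^ 2 = -(A * y ^ 2) + B * y + C :=
      Real.sq_sqrt (hq y hy)
    set P := Real.sqrt (-(A * x ^ 2) + B * x + C) with hPdef
    set Q := Real.sqrt (-(A * y ^ 2) + B * y + C) with hQdef
    have hP0 : 0 ≤ P := Real.sqrt_nonneg _
    have hQ0 : 0 ≤ Q := Real.sqrt_nonneg _
    have hxy2 : 0 < (x - y) ^ 2 := by
      have h := sub_ne_zero.mpr hxy
      positivity
    have hstep : a * P + (1 - a) * Q <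
        Real.sqrt (-(A * (a * x + (1 - a) * y) ^ 2) + B * (a * x + (1 - a) * y) + C) := by
      have hnn : 0 ≤ a * P + (1 - a) * Q :=
        add_nonneg (mul_nonneg ha.le hP0) (mul_nonneg hb.le hQ0)
      refine (Real.lt_sqrt hnn).mpr ?_
      nlinarith [mul_nonneg (mul_nonneg ha.le hb.le) (sq_nonneg (P - Q)),
        mul_pos hA (mul_pos (mul_pos ha hb) hxy2)]
    have hcr : 0 < c * r := mul_pos hc hr
    nlinarith [mul_lt_mul_of_pos_left hstep hcr]

set_option maxHeartbeats 1000000 in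
theorem stmt_16 (r s u : ℝ) (hr : 0 < r) (hs : 0 < s) (hu : 0 < u)
    (g : ℝ → ℝ)
    (hg : ∀ t, g t = (2 * s / (s ^ 2 + r ^ 2 / 4)) *
      (-(u * ((s ^ 2 - r ^ 2 / 4) * t + r ^ 2 / 2)) +
        r * Real.sqrt (-(s ^ 2 * u ^ 2 * t ^ 2) +
          2 * s * u * (s ^ 2 + r ^ 2 / 4 + s * u) * t + r ^ 2 * u ^ 2 / 4))) :
    g 0 = 0 ∧
    StrictConcaveOn ℝ (Set.Icc (0 : ℝ) 1) g ∧
    (0 < g 1 ↔ s ≤ Real.sqrt 3 / 2 * r ∨ u < 2 * r ^ 2 * s / (s ^ 2 - 3 * r ^ 2 / 4)) ∧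
    (g 1 = 0 ↔ Real.sqrt 3 / 2 * r < s ∧ u = 2 * r ^ 2 * s / (s ^ 2 - 3 * r ^ 2 / 4)) ∧
    (g 1 < 0 ↔ Real.sqrt 3 / 2 * r < s ∧ 2 * r ^ 2 * s / (s ^ 2 - 3 * r ^ 2 / 4) < u) := by
  have hK : 0 < s ^ 2 + r ^ 2 / 4 := by positivity
  have hc : 0 < 2 * s / (s ^ 2 + r ^ 2 / 4) := by positivity
  -- g 0 = 0
  have hg0 : g 0 = 0 := by
    rw [hg]
    rw [show -(s ^ 2 * u ^ 2 * (0:ℝ) ^ 2) +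
        2 * s * u * (s ^ 2 + r ^ 2 / 4 + s * u) * 0 + r ^ 2 * u ^ 2 / 4 = (r * u / 2) ^ 2 by ring]
    rw [Real.sqrt_sq (by positivity)]
    ring
  -- strict concavity
  have hconc : StrictConcaveOn ℝ (Set.Icc (0 : ℝ) 1) g := by
    have hq : ∀ t ∈ Set.Icc (0:ℝ) 1,
        0 ≤ -((s ^ 2 * u ^ 2) * t ^ 2) + (2 * s * u * (s ^ 2 + r ^ 2 / 4 + s * u)) * t
          + r ^ 2 * u ^ 2 / 4 := by
      intro t ht
      obtain ⟨ht0, ht1⟩ := ht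
      have h1 : s ^ 2 * u ^ 2 * t ≤ s ^ 2 * u ^ 2 :=
        mul_le_of_le_one_right (by positivity) ht1
      have h2 : s ^ 2 * u ^ 2 ≤ 2 * s * u * (s ^ 2 + r ^ 2 / 4 + s * u) := by
        nlinarith [mul_pos (mul_pos (mul_pos hs hs) hs) hu,
          mul_pos (mul_pos hs hu) (mul_pos hr hr), sq_nonneg (s * u)]
      have h3 : 0 ≤ t * (2 * s * u * (s ^ 2 + r ^ 2 / 4 + s * u) - s ^ 2 * u ^ 2 * t) :=
        mul_nonneg ht0 (by linarith)
      nlinarith [sq_nonneg (r * u)]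
    have hgeq : g = fun t => (2 * s / (s ^ 2 + r ^ 2 / 4)) *
        ((-(u * (s ^ 2 - r ^ 2 / 4))) * t + (-(u * (r ^ 2 / 2))) +
          r * Real.sqrt (-((s ^ 2 * u ^ 2) * t ^ 2) +
            (2 * s * u * (s ^ 2 + r ^ 2 / 4 + s * u)) * t + r ^ 2 * u ^ 2 / 4)) := by
      funext t
      rw [hg t]
      ring_nf
    rw [hgeq]
    exact aux_concave_sqrt (s ^ 2 * u ^ 2) (2 * s * u * (s ^ 2 + r ^ 2 / 4 + s * u))
      (r ^ 2 * u ^ 2 / 4) (2 * s / (s ^ 2 + r ^ 2 / 4)) r (by positivity) hc hr hq _ _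
  -- value at 1
  have hW2 : Real.sqrt (u * (s ^ 2 + r ^ 2 / 4) * (u + 2 * s)) ^ 2
      = u * (s ^ 2 + r ^ 2 / 4) * (u + 2 * s) := Real.sq_sqrt (by positivity)
  set W := Real.sqrt (u * (s ^ 2 + r ^ 2 / 4) * (u + 2 * s)) with hWdef
  have hWpos : 0 < W := Real.sqrt_pos.mpr (by positivity)
  clear_value W
  have hg1 : g 1 = (2 * s / (s ^ 2 + r ^ 2 / 4)) * (r * W - u * (s ^ 2 + r ^ 2 / 4)) := by
    rw [hg]
    rw [show -(s ^ 2 * u ^ 2 * (1:ℝ) ^ 2) +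
        2 * s * u * (s ^ 2 + r ^ 2 / 4 + s * u) * 1 + r ^ 2 * u ^ 2 / 4
        = u * (s ^ 2 + r ^ 2 / 4) * (u + 2 * s) by ring]
    rw [← hWdef]
    ring
  set D := 2 * r ^ 2 * s - u * (s ^ 2 - 3 * r ^ 2 / 4) with hDdef
  clear_value D
  have hkey : (r * W - u * (s ^ 2 + r ^ 2 / 4)) * (r * W + u * (s ^ 2 + r ^ 2 / 4))
      = u * (s ^ 2 + r ^ 2 / 4) * D := by
    have hrw : (r * W) ^ 2 = r ^ 2 * (u * (s ^ 2 + r ^ 2 / 4) * (u + 2 * s)) := by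
      rw [mul_pow, hW2]
    linear_combination hrw - u * (s ^ 2 + r ^ 2 / 4) * hDdef
  have hsum : 0 < r * W + u * (s ^ 2 + r ^ 2 / 4) := by positivity
  have huK : 0 < u * (s ^ 2 + r ^ 2 / 4) := by positivity
  -- sign of g 1 vs sign of D
  have hgtD : 0 < g 1 ↔ 0 < D := by
    rw [hg1]
    constructor
    · intro h
      have hx : 0 < r * W - u * (s ^ 2 + r ^ 2 / 4) := by
        by_contra hx
        push_neg at hx
        have := mul_nonneg hc.le (neg_nonneg.mpr hx)
        nlinarith
      have h2 : 0 < u * (s ^ 2 + r ^ 2 / 4) * D := hkey ▸ mul_pos hx hsum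
      by_contra hD
      push_neg at hD
      nlinarith [mul_nonneg huK.le (neg_nonneg.mpr hD)]
    · intro h
      have hx : 0 < r * W - u * (s ^ 2 + r ^ 2 / 4) := by
        by_contra hx
        push_neg at hx
        have h3 : 0 ≤ -(r * W - u * (s ^ 2 + r ^ 2 / 4)) * (r * W + u * (s ^ 2 + r ^ 2 / 4)) :=
          mul_nonneg (neg_nonneg.mpr hx) hsum.le
        nlinarith [mul_pos huK h, hkey]
      exact mul_pos hc hx
  have heqD : g 1 = 0 ↔ D = 0 := by
    rw [hg1]
    constructor
    · intro h
      have hx : r * W - u * (s ^ 2 + r ^ 2 / 4) = 0 := by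
        rcases mul_eq_zero.mp h with h' | h'
        · exact absurd h' (ne_of_gt hc)
        · exact h'
      have := hkey
      rw [hx, zero_mul] at this
      have := this.symm
      exact (mul_eq_zero.mp this).resolve_left (ne_of_gt huK)
    · intro h
      have hx : r * W - u * (s ^ 2 + r ^ 2 / 4) = 0 := by
        have h2 : (r * W - u * (s ^ 2 + r ^ 2 / 4)) * (r * W + u * (s ^ 2 + r ^ 2 / 4)) = 0 := by
          rw [hkey, h, mul_zero]
        exact (mul_eq_zero.mp h2).resolve_right (ne_of_gt hsum)
      rw [hx, mul_zero]
  have hltD : g 1 < 0 ↔ D < 0 := by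
    constructor
    · intro h
      rcases lt_trichotomy D 0 with h' | h' | h'
      · exact h'
      · exact absurd (heqD.mpr h') (ne_of_lt h)
      · exact absurd (hgtD.mpr h') (lt_asymm h)
    · intro h
      rcases lt_trichotomy (g 1) 0 with h' | h' | h'
      · exact h'
      · exact absurd (heqD.mp h') (ne_of_lt h)
      · exact absurd (hgtD.mp h') (lt_asymm h)
  -- relating s ≤ √3/2 r with E ≤ 0
  have h3 : Real.sqrt 3 ^ 2 = 3 := Real.sq_sqrt (by norm_num)
  have h3n : 0 ≤ Real.sqrt 3 := Real.sqrt_nonneg 3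
  have h3p : 0 < Real.sqrt 3 := Real.sqrt_pos.mpr (by norm_num)
  have hsE : s ≤ Real.sqrt 3 / 2 * r ↔ s ^ 2 - 3 * r ^ 2 / 4 ≤ 0 := by
    have htpos : 0 < Real.sqrt 3 / 2 * r := by positivity
    constructor
    · intro h
      nlinarith [mul_le_mul h h hs.le htpos.le]
    · intro h
      by_contra hcon
      push_neg at hcon
      nlinarith [mul_lt_mul_of_pos_left hcon hs, mul_lt_mul_of_pos_right hcon htpos]
  have hsE' : Real.sqrt 3 / 2 * r < s ↔ 0 < s ^ 2 - 3 * r ^ 2 / 4 := by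
    rw [← not_le, ← not_le, hsE]
  refine ⟨hg0, hconc, ?_, ?_, ?_⟩
  · rw [hgtD]
    constructor
    · intro h
      by_cases hE : s ^ 2 - 3 * r ^ 2 / 4 ≤ 0
      · exact Or.inl (hsE.mpr hE)
      · push_neg at hE
        right
        rw [lt_div_iff₀ hE]
        nlinarith
    · intro h
      by_cases hE : s ^ 2 - 3 * r ^ 2 / 4 ≤ 0
      · nlinarith [mul_nonpos_of_nonneg_of_nonpos hu.le hE]
      · push_neg at hE
        rcases h with h | h
        · exact absurd (hsE.mp h) (not_le.mpr hE)
        · rw [lt_div_iff₀ hE] at h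
          nlinarith
  · rw [heqD]
    constructor
    · intro h
      have hE : 0 < s ^ 2 - 3 * r ^ 2 / 4 := by
        by_contra hE
        push_neg at hE
        nlinarith [mul_nonpos_of_nonneg_of_nonpos hu.le hE]
      refine ⟨hsE'.mpr hE, ?_⟩
      rw [eq_div_iff (ne_of_gt hE)]
      nlinarith
    · rintro ⟨h1, h2⟩
      have hE : 0 < s ^ 2 - 3 * r ^ 2 / 4 := hsE'.mp h1
      rw [eq_div_iff (ne_of_gt hE)] at h2
      nlinarith
  · rw [hltD]
    constructor
    · intro h
      have hE : 0 < s ^ 2 - 3 * r ^ 2 / 4 := by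
        by_contra hE
        push_neg at hE
        nlinarith [mul_nonpos_of_nonneg_of_nonpos hu.le hE]
      refine ⟨hsE'.mpr hE, ?_⟩
      rw [div_lt_iff₀ hE]
      nlinarith
    · rintro ⟨h1, h2⟩
      have hE : 0 < s ^ 2 - 3 * r ^ 2 / 4 := hsE'.mp h1
      rw [div_lt_iff₀ hE] at h2
      nlinarith
end
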